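/- There exists an absolute constant C ≥ 1 with the following property. Let δ > 0 and t > 0 with Cδ ≤ t. Let z = (x, r) and z′ = (x′, r′) be points of B₀ = {(x, r) ∈ ℝ² × ℝ : r ∈ [1/2, 1], |x| ≤ 1/4} with t ≤ |z − z′| ≤ 2t, and let θ ∈ [0, 2π) satisfy |π_θ(z) − π_θ(z′)| ≤ δ, where π_θ is the orthogonal projection of ℝ³ onto the plane orthogonal to γ(θ) = (cos θ, sin θ, 1)/√2. Then r ≠ r′, x ≠ x′, and |sgn(r − r′) · (x′ − x)/|x′ − x| + (cos θ, sin θ)| ≤ C δ/t. -/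

import Mathlib

set_option maxHeartbeats 1000000

open MeasureTheory Metric Real

/-- `ℝ³` as a Euclidean space. -/
noncomputable abbrev E3 := EuclideanSpace ℝ (Fin 3)

/-- The vector `(a, b, c) ∈ ℝ³`. -/
noncomputable def vec3 (a b c : ℝ) : E3 := (WithLp.equiv 2 (Fin 3 → ℝ)).symm ![a, b, c]

/-- The unit vector `γ(θ) = (cos θ, sin θ, 1)/√2`. -/
noncomputable def gam (θ : ℝ) : E3 := (Real.sqrt 2)⁻¹ • vec3 (Real.cos θ) (Real.sin θ) 1

/-- The orthogonal projection `π_θ` of `ℝ³` onto the plane `γ(θ)^⊥`,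
viewed as a map `ℝ³ → ℝ³`. -/
noncomputable def projθ (θ : ℝ) (z : E3) : E3 := (Submodule.orthogonalProjectionOnto (ℝ ∙ gam θ)ᗮ z : E3)

/-- The standard region `B₀ = {(x, r) ∈ ℝ² × ℝ : r ∈ [1/2, 1], |x| ≤ 1/4}`. -/
def B0 : Set E3 :=
  {z | z 2 ∈ Set.Icc (1 / 2 : ℝ) 1 ∧ Real.sqrt ((z 0) ^ 2 + (z 1) ^ 2) ≤ 1 / 4}

theorem gam_norm (θ : ℝ) : ‖gam θ‖ = 1 := by
  rw [gam, norm_smul]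
  have h : ‖vec3 (cos θ) (sin θ) 1‖ = Real.sqrt 2 := by
    rw [EuclideanSpace.norm_eq]
    simp [vec3, Fin.sum_univ_three, Real.norm_eq_abs, sq_abs]
    norm_num
  rw [h, Real.norm_eq_abs, abs_of_nonneg (by positivity), inv_mul_cancel₀ (by positivity)]

theorem projθ_eq (θ : ℝ) (y : E3) : projθ θ y = y - (inner ℝ (gam θ) y : ℝ) • gam θ := by
  rw [projθ, ← Submodule.starProjection_apply, Submodule.starProjection_orthogonal_val,
    Submodule.starProjection_unit_singleton ℝ (gam_norm θ)]

theorem apply0 (y w : E3) (s : ℝ) (θ : ℝ) :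
    (y - w - s • gam θ) 0 = y 0 - w 0 - s * ((Real.sqrt 2)⁻¹ * cos θ) := by
  simp [gam, vec3]
theorem apply1 (y w : E3) (s : ℝ) (θ : ℝ) :
    (y - w - s • gam θ) 1 = y 1 - w 1 - s * ((Real.sqrt 2)⁻¹ * sin θ) := by
  simp [gam, vec3]
theorem apply2 (y w : E3) (s : ℝ) (θ : ℝ) :
    (y - w - s • gam θ) 2 = y 2 - w 2 - s * (Real.sqrt 2)⁻¹ := by
  simp [gam, vec3]

theorem normsq (x : E3) : ‖x‖^2 = (x 0)^2 + (x 1)^2 + (x 2)^2 := by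
  rw [EuclideanSpace.norm_eq, Real.sq_sqrt (by positivity)]
  simp [Fin.sum_univ_three, sq_abs]

theorem aux_est (a b cθ sθ k δ : ℝ) (hu : cθ^2 + sθ^2 = 1) (hδ0 : 0 ≤ δ) (hk : 2*δ < k)
    (h : (a - k*cθ)^2 + (b - k*sθ)^2 ≤ δ^2) :
    Real.sqrt ((a / Real.sqrt (a^2+b^2) - cθ)^2 + (b / Real.sqrt (a^2+b^2) - sθ)^2)
      ≤ δ / (k - δ) := by
  set R := Real.sqrt (a^2+b^2) with hR
  have hR0 : 0 ≤ R := Real.sqrt_nonneg _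
  have hR2 : R^2 = a^2 + b^2 := Real.sq_sqrt (by positivity)
  have hP : a*cθ + b*sθ ≤ R := by
    nlinarith [sq_nonneg (a*sθ - b*cθ), sq_nonneg (R - (a*cθ + b*sθ)), sq_nonneg (R + (a*cθ + b*sθ))]
  have h2 : R^2 + k^2 - 2*k*(a*cθ + b*sθ) ≤ δ^2 := by nlinarith
  have hRk : k - δ ≤ R := by nlinarith [sq_nonneg (R - k + δ), sq_nonneg (R - k)]
  have hRpos : 0 < R := by linarith
  have e1 : a / R - cθ = (a - R*cθ)/R := by field_simp
  have e2 : b / R - sθ = (b - R*sθ)/R := by field_simp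
  rw [e1, e2, div_pow, div_pow, ← add_div]
  have hkd0 : 0 < k - δ := by linarith
  have hbound : ((a - R*cθ)^2 + (b - R*sθ)^2) / R^2 ≤ δ^2/(k-δ)^2 := by
    rw [div_le_div_iff₀ (by positivity) (by positivity)]
    have hN : (a - R*cθ)^2 + (b - R*sθ)^2 = 2*R^2 - 2*R*(a*cθ + b*sθ) := by
      linear_combination (-1) * hR2 + R^2 * hu
    have h3 : k*(2*R^2 - 2*R*(a*cθ + b*sθ)) ≤ R*(δ^2 - (R-k)^2) := by
      nlinarith [mul_le_mul_of_nonneg_left h2 hR0]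
    have hkR : (k-δ)^2 ≤ k*R := by nlinarith
    have h4 : (δ^2 - (R-k)^2) * (k-δ)^2 ≤ k*R*δ^2 := by
      nlinarith [sq_nonneg ((R-k)*(k-δ)), mul_le_mul_of_nonneg_left hkR (sq_nonneg δ)]
    have h5 := mul_le_mul_of_nonneg_right h3 (sq_nonneg (k-δ))
    have h6 := mul_le_mul_of_nonneg_left h4 hR0
    have hk0 : (0:ℝ) < k := by linarith
    rw [hN]
    have h7 : k * ((2*R^2 - 2*R*(a*cθ + b*sθ)) * (k-δ)^2) ≤ k * (δ^2*R^2) := by linarith [h5, h6]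
    exact le_of_mul_le_mul_left h7 hk0
  calc Real.sqrt (((a - R*cθ)^2 + (b - R*sθ)^2) / R^2) ≤ Real.sqrt (δ^2/(k-δ)^2) :=
        Real.sqrt_le_sqrt hbound
    _ = δ/(k-δ) := by
        rw [← div_pow, Real.sqrt_sq (by positivity)]

theorem case_lemma (a0 a1 σ K δ t cθ sθ : ℝ) (hu : cθ^2+sθ^2=1) (hδ : 0 < δ) (ht : 0 < t)
    (hσ : σ^2 = 1) (hKd : 13*t/20 + δ ≤ K) (hδt : 100*δ ≤ t)
    (hδ2 : (σ*a0 - K*cθ)^2 + (σ*a1 - K*sθ)^2 ≤ δ^2) :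
    ¬(a0 = 0 ∧ a1 = 0) ∧
    Real.sqrt ((σ * -a0 / Real.sqrt ((-a0)^2 + (-a1)^2) + cθ)^2
      + (σ * -a1 / Real.sqrt ((-a0)^2+(-a1)^2) + sθ)^2) ≤ 100*δ/t := by
  have h2k : 2*δ < K := by nlinarith
  constructor
  · rintro ⟨h0, h1⟩
    rw [h0, h1] at hδ2
    have hK2 : K^2*(cθ^2+sθ^2) = K^2 := by rw [hu]; ring
    nlinarith [hδ2, hK2]
  · have haux := aux_est (σ*a0) (σ*a1) cθ sθ K δ hu hδ.le h2k hδ2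
    have hRe : (σ*a0)^2 + (σ*a1)^2 = (-a0)^2 + (-a1)^2 := by
      linear_combination (a0^2 + a1^2) * hσ
    rw [hRe] at haux
    have hEq : (σ * -a0 / Real.sqrt ((-a0)^2+(-a1)^2) + cθ)^2
        + (σ * -a1 / Real.sqrt ((-a0)^2+(-a1)^2) + sθ)^2
        = (σ*a0 / Real.sqrt ((-a0)^2+(-a1)^2) - cθ)^2
          + (σ*a1 / Real.sqrt ((-a0)^2+(-a1)^2) - sθ)^2 := by ring
    rw [hEq]
    refine le_trans haux ?_
    rw [div_le_div_iff₀ (by linarith) ht]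
    nlinarith

theorem final_lemma (a0 a1 a2 s r2 δ t cθ sθ : ℝ)
    (hu : cθ^2+sθ^2=1) (hδ : 0 < δ) (ht : 0 < t) (hδt : 100*δ ≤ t)
    (hr2sq : r2^2 = 2) (hr2pos : 0 < r2)
    (hsum : (a0 - s*(r2⁻¹*cθ))^2 + (a1 - s*(r2⁻¹*sθ))^2 + (a2 - s*r2⁻¹)^2 ≤ δ^2)
    (habs : t - δ ≤ |s|) :
    a2 ≠ 0 ∧ ¬(a0 = 0 ∧ a1 = 0) ∧
    Real.sqrt ((Real.sign a2 * -a0 / Real.sqrt ((-a0)^2+(-a1)^2) + cθ)^2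
      + (Real.sign a2 * -a1 / Real.sqrt ((-a0)^2+(-a1)^2) + sθ)^2) ≤ 100*δ/t := by
  have hr2lt : r2 < 1.5 := by nlinarith
  have hδ2g : (a0 - s*r2⁻¹*cθ)^2 + (a1 - s*r2⁻¹*sθ)^2 ≤ δ^2 := by
    nlinarith [sq_nonneg (a2 - s*r2⁻¹)]
  have hcg : (a2 - s*r2⁻¹)^2 ≤ δ^2 := by
    nlinarith [sq_nonneg (a0 - s*(r2⁻¹*cθ)), sq_nonneg (a1 - s*(r2⁻¹*sθ))]
  rcases lt_trichotomy s 0 with hneg | hzero | hpos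
  · -- s < 0
    rw [abs_of_neg hneg] at habs
    have hKr2 : (-s*r2⁻¹) * r2 = -s := by field_simp
    have hKpos : 0 < -s*r2⁻¹ := mul_pos (by linarith) (inv_pos.2 hr2pos)
    have hKd : 13*t/20 + δ ≤ -s*r2⁻¹ := by
      nlinarith [mul_nonneg hKpos.le (by linarith : (0:ℝ) ≤ 1.5 - r2)]
    have ha2neg : a2 < 0 := by
      nlinarith [sq_nonneg (a2 + (-s*r2⁻¹) - δ), hcg]
    have hsgn : Real.sign a2 = -1 := Real.sign_of_neg ha2neg
    have hδ2 : ((-1)*a0 - (-s*r2⁻¹)*cθ)^2 + ((-1)*a1 - (-s*r2⁻¹)*sθ)^2 ≤ δ^2 := by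
      nlinarith [hδ2g]
    have hmain := case_lemma a0 a1 (-1) (-s*r2⁻¹) δ t cθ sθ hu hδ ht (by norm_num) hKd hδt hδ2
    rw [hsgn]
    exact ⟨ne_of_lt ha2neg, hmain.1, hmain.2⟩
  · exfalso
    rw [hzero] at habs
    simp at habs
    linarith
  · -- s > 0
    rw [abs_of_pos hpos] at habs
    have hKr2 : (s*r2⁻¹) * r2 = s := by field_simp
    have hKpos : 0 < s*r2⁻¹ := mul_pos hpos (inv_pos.2 hr2pos)
    have hKd : 13*t/20 + δ ≤ s*r2⁻¹ := by
      nlinarith [mul_nonneg hKpos.le (by linarith : (0:ℝ) ≤ 1.5 - r2)]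
    have ha2pos : 0 < a2 := by
      nlinarith [sq_nonneg (a2 - s*r2⁻¹ + δ), hcg]
    have hsgn : Real.sign a2 = 1 := Real.sign_of_pos ha2pos
    have hδ2 : ((1:ℝ)*a0 - (s*r2⁻¹)*cθ)^2 + ((1:ℝ)*a1 - (s*r2⁻¹)*sθ)^2 ≤ δ^2 := by
      nlinarith [hδ2g]
    have hmain := case_lemma a0 a1 1 (s*r2⁻¹) δ t cθ sθ hu hδ ht (by norm_num) hKd hδt hδ2
    rw [hsgn]
    exact ⟨ne_of_gt ha2pos, hmain.1, hmain.2⟩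

/-- There is an absolute constant `C ≥ 1` such that: if `δ > 0`, `t > 0`
with `Cδ ≤ t`, `z = (x, r)` and `z' = (x', r')` are points of `B₀` with `t ≤ |z − z'| ≤ 2t`,
and `θ ∈ [0, 2π)` satisfies `|π_θ(z) − π_θ(z')| ≤ δ`, then `r ≠ r'`, `x ≠ x'`, and
`|sgn(r − r')·(x' − x)/|x' − x| + (cos θ, sin θ)| ≤ Cδ/t`. -/
theorem stmt9 :
    ∃ C : ℝ, 1 ≤ C ∧
      ∀ δ t : ℝ, 0 < δ → 0 < t → C * δ ≤ t →
        ∀ z ∈ B0, ∀ z' ∈ B0, t ≤ ‖z - z'‖ → ‖z - z'‖ ≤ 2 * t →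
          ∀ θ ∈ Set.Ico (0 : ℝ) (2 * π), ‖projθ θ z - projθ θ z'‖ ≤ δ →
            z 2 ≠ z' 2 ∧ ¬(z 0 = z' 0 ∧ z 1 = z' 1) ∧
            Real.sqrt
                ((Real.sign (z 2 - z' 2) * (z' 0 - z 0)
                    / Real.sqrt ((z' 0 - z 0) ^ 2 + (z' 1 - z 1) ^ 2) + Real.cos θ) ^ 2
                  + (Real.sign (z 2 - z' 2) * (z' 1 - z 1)
                    / Real.sqrt ((z' 0 - z 0) ^ 2 + (z' 1 - z 1) ^ 2) + Real.sin θ) ^ 2)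
              ≤ C * δ / t := by
  refine ⟨100, by norm_num, ?_⟩
  intro δ t hδ ht hCt z hz z' hz' h1 h2 θ hθ hproj
  have hu : cos θ ^ 2 + sin θ ^ 2 = 1 := cos_sq_add_sin_sq θ
  have hr2sq : (Real.sqrt 2)^2 = 2 := Real.sq_sqrt (by norm_num)
  have hr2pos : 0 < Real.sqrt 2 := Real.sqrt_pos.2 (by norm_num)
  set s : ℝ := inner ℝ (gam θ) (z - z') with hs
  have hx : projθ θ z - projθ θ z' = z - z' - s • gam θ := by
    rw [projθ_eq, projθ_eq]
    have hin : s = (inner ℝ (gam θ) z : ℝ) - (inner ℝ (gam θ) z' : ℝ) := by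
      rw [hs, inner_sub_right]
    rw [hin, sub_smul]
    abel
  rw [hx] at hproj
  have h9 : ‖z - z' - s • gam θ‖^2 ≤ δ^2 := by
    nlinarith [norm_nonneg (z - z' - s • gam θ)]
  rw [normsq, apply0, apply1, apply2] at h9
  have hnormeq : ‖z - z'‖ ≤ ‖z - z' - s • gam θ‖ + ‖s • gam θ‖ := by
    have := norm_add_le (z - z' - s • gam θ) (s • gam θ)
    simpa using this
  have hsmul : ‖s • gam θ‖ = |s| := by
    rw [norm_smul, gam_norm, mul_one, Real.norm_eq_abs]
  have habs : t - δ ≤ |s| := by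
    rw [hsmul] at hnormeq
    linarith
  have F := final_lemma (z 0 - z' 0) (z 1 - z' 1) (z 2 - z' 2) s (Real.sqrt 2) δ t
    (cos θ) (sin θ) hu hδ ht hCt hr2sq hr2pos h9 habs
  rw [show z' 0 - z 0 = -(z 0 - z' 0) by ring, show z' 1 - z 1 = -(z 1 - z' 1) by ring]
  exact ⟨sub_ne_zero.mp F.1,
    fun hh => F.2.1 ⟨by rw [hh.1]; ring, by rw [hh.2]; ring⟩,
    F.2.2⟩
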